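/- Let m > 1/2, n ≥ 1 an integer, and for 0 ≤ j ≤ n−1 set c_j = (2/n) Σ_{k=1}^∞ cos(2πkj/n)/(2πk)^{2m}. Then for every 0 ≤ l ≤ n−1, Σ_{j=0}^{n−1} c_j e^{2πi jl/n} = λ_{c,l}, where λ_{c,0} = 2 Σ_{k=1}^∞ (2πkn)^{−2m} and, for 1 ≤ l ≤ n−1, λ_{c,l} = Σ_{k=1}^∞ (2π(kn−l))^{−2m} + Σ_{k=0}^∞ (2π(kn+l))^{−2m}. -/

import Mathlib

open Real Finset

noncomputable section

/-- `c_j = (2/n) ∑_{k=1}^∞ cos(2πkj/n)/(2πk)^{2m}`. -/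
def cSeq (m : ℝ) (n : ℕ) (j : ℕ) : ℝ :=
  (2 / n) * ∑' kk : ℕ, Real.cos (2 * π * (kk + 1) * j / n) / (2 * π * (kk + 1)) ^ (2 * m)

/-- The eigenvalues `λ_{c,l}`: `λ_{c,0} = 2 ∑_{k=1}^∞ (2πkn)^{-2m}` and, for `1 ≤ l ≤ n-1`,
`λ_{c,l} = ∑_{k=1}^∞ (2π(kn-l))^{-2m} + ∑_{k=0}^∞ (2π(kn+l))^{-2m}`. -/
def lamC (m : ℝ) (n : ℕ) (l : ℕ) : ℝ :=
  if l = 0 then 2 * ∑' kk : ℕ, (2 * π * (kk + 1) * n) ^ (-(2 * m))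
  else (∑' kk : ℕ, (2 * π * ((kk + 1) * (n : ℝ) - l)) ^ (-(2 * m)))
    + ∑' kk : ℕ, (2 * π * ((kk : ℝ) * n + l)) ^ (-(2 * m))

lemma geom_aux {n : ℕ} (hn : 0 < n) (a : ℤ) :
    ∑ j ∈ Finset.range n, Complex.exp (2 * (π : ℂ) * Complex.I * a * j / n)
      = if (n : ℤ) ∣ a then (n : ℂ) else 0 := by
  have hn' : (n : ℂ) ≠ 0 := Nat.cast_ne_zero.2 hn.ne'
  have hI : (2 * (π : ℂ) * Complex.I) ≠ 0 := by
    simp [Real.pi_ne_zero, Complex.I_ne_zero, Complex.ofReal_ne_zero]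
  have hexp : ∀ j ∈ Finset.range n, Complex.exp (2 * (π : ℂ) * Complex.I * a * j / n)
      = (Complex.exp (2 * (π : ℂ) * Complex.I * a / n)) ^ j := by
    intro j _
    rw [← Complex.exp_nat_mul]
    congr 1
    ring
  rw [Finset.sum_congr rfl hexp]
  by_cases h : (n : ℤ) ∣ a
  · obtain ⟨b, hb⟩ := h
    have h1 : Complex.exp (2 * (π : ℂ) * Complex.I * a / n) = 1 := by
      have harg : (2 * (π : ℂ) * Complex.I * a / n) = (b : ℂ) * (2 * π * Complex.I) := by
        rw [hb]; push_cast; field_simp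
      rw [harg, Complex.exp_int_mul_two_pi_mul_I]
    rw [if_pos ⟨b, hb⟩]
    simp [h1]
  · rw [if_neg h]
    have hζ : Complex.exp (2 * (π : ℂ) * Complex.I * a / n) ≠ 1 := by
      intro hone
      rcases Complex.exp_eq_one_iff.1 hone with ⟨c, hc⟩
      apply h
      have h2 : (a : ℂ) / n = c :=
        mul_left_cancel₀ hI (by rw [show 2 * (π : ℂ) * Complex.I * ((a : ℂ) / n)
          = 2 * (π : ℂ) * Complex.I * a / n from by ring, hc]; ring)
      have h3 : (a : ℂ) = c * n := (div_eq_iff hn').1 h2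
      exact ⟨c, by exact_mod_cast h3.trans (mul_comm _ _)⟩
    rw [geom_sum_eq hζ]
    have hpow : Complex.exp (2 * (π : ℂ) * Complex.I * a / n) ^ n = 1 := by
      rw [← Complex.exp_nat_mul]
      have harg : (n : ℂ) * (2 * (π : ℂ) * Complex.I * a / n) = a * (2 * π * Complex.I) := by
        field_simp
      rw [harg, Complex.exp_int_mul_two_pi_mul_I]
    rw [hpow]
    simp

lemma cos_sum {n : ℕ} (hn : 0 < n) (a l : ℕ) :
    ∑ j ∈ Finset.range n, (Real.cos (2 * π * a * j / n) : ℂ)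
        * Complex.exp (2 * π * Complex.I * j * l / n)
      = ((if (n : ℤ) ∣ ((a : ℤ) + l) then (n : ℂ) else 0)
        + (if (n : ℤ) ∣ ((l : ℤ) - a) then (n : ℂ) else 0)) / 2 := by
  have key : ∀ j ∈ Finset.range n,
      (Real.cos (2 * π * a * j / n) : ℂ) * Complex.exp (2 * π * Complex.I * j * l / n)
        = (Complex.exp (2 * (π : ℂ) * Complex.I * (((a : ℤ) + l : ℤ)) * j / n)
          + Complex.exp (2 * (π : ℂ) * Complex.I * (((l : ℤ) - a : ℤ)) * j / n)) / 2 := by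
    intro j _
    rw [Complex.ofReal_cos]
    simp only [Complex.cos]
    rw [div_mul_eq_mul_div, add_mul, ← Complex.exp_add, ← Complex.exp_add]
    congr 2 <;> push_cast <;> ring
  rw [Finset.sum_congr rfl key, ← Finset.sum_div, Finset.sum_add_distrib,
    geom_aux hn _, geom_aux hn _]

lemma reindexA (m : ℝ) {n : ℕ} (hn : 0 < n) {l : ℕ} (hl : l < n) :
    ∑' k : ℕ, (if (n : ℤ) ∣ ((k : ℤ) + 1 + l) then (2 * π * ((k : ℝ) + 1)) ^ (-(2 * m)) else 0)
      = ∑' q : ℕ, (2 * π * (((q : ℝ) + 1) * n - l)) ^ (-(2 * m)) := by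
  have hbase : ∀ q : ℕ, (0 : ℝ) < 2 * π * (((q : ℝ) + 1) * n - l) := by
    intro q
    have h1 : (l : ℝ) < ((q : ℝ) + 1) * n := by
      have h0 : (l : ℝ) < n := by exact_mod_cast hl
      have h2 : (n : ℝ) ≤ ((q : ℝ) + 1) * n := by
        nlinarith [Nat.cast_nonneg (α := ℝ) q, Nat.cast_nonneg (α := ℝ) n]
      linarith
    have := Real.pi_pos
    nlinarith
  have hmul : ∀ q : ℕ, l + 1 ≤ (q + 1) * n := fun q =>
    le_trans hl (Nat.le_mul_of_pos_left n (Nat.succ_pos q))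
  refine tsum_eq_tsum_of_ne_zero_bij (fun q => (q.1 + 1) * n - l - 1) ?_ ?_ ?_
  · intro x y hxy
    have hxy' : (x.1 + 1) * n - l - 1 = (y.1 + 1) * n - l - 1 := hxy
    have hx := hmul x.1
    have hy := hmul y.1
    have hxy'' : (x.1 + 1) * n = (y.1 + 1) * n := by omega
    have := Nat.eq_of_mul_eq_mul_right hn hxy''
    exact Subtype.ext (by omega)
  · intro k hk
    have hcond : (n : ℤ) ∣ ((k : ℤ) + 1 + l) := by
      by_contra hc
      simp only [Function.mem_support, if_neg hc] at hk
      exact hk rfl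
    obtain ⟨c, hc⟩ := hcond
    have hcpos : 0 < c := by
      have h1 : (0 : ℤ) < (n : ℤ) * c := by rw [← hc]; positivity
      by_contra hc0
      push_neg at hc0
      nlinarith [Int.natCast_pos.2 hn]
    have hct : (c.toNat : ℤ) = c := Int.toNat_of_nonneg hcpos.le
    set q : ℕ := c.toNat - 1 with hq
    have hnat : k + 1 + l = (q + 1) * n := by
      have h1 : ((k + 1 + l : ℕ) : ℤ) = (((q + 1) * n : ℕ) : ℤ) := by
        push_cast
        have hq1 : (q : ℤ) + 1 = c := by
          rw [hq]; omega
        rw [hq1]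
        linarith [hc]
      exact_mod_cast h1
    have hgq : (fun q : ℕ => (2 * π * (((q : ℝ) + 1) * n - l)) ^ (-(2 * m))) q ≠ 0 :=
      (Real.rpow_pos_of_pos (hbase q) _).ne'
    refine ⟨⟨q, hgq⟩, ?_⟩
    show (q + 1) * n - l - 1 = k
    omega
  · intro q
    show (if (n : ℤ) ∣ ((((q.1 + 1) * n - l - 1 : ℕ) : ℤ) + 1 + l)
        then (2 * π * ((((q.1 + 1) * n - l - 1 : ℕ) : ℝ) + 1)) ^ (-(2 * m)) else 0)
      = (2 * π * (((q.1 : ℝ) + 1) * n - l)) ^ (-(2 * m))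
    have hPl := hmul q.1
    have hK : ((q.1 + 1) * n - l - 1) + 1 + l = (q.1 + 1) * n := by omega
    have hKZ : ((((q.1 + 1) * n - l - 1 : ℕ) : ℤ) + 1 + l) = (((q.1 + 1) * n : ℕ) : ℤ) := by
      have := congrArg (fun t : ℕ => (t : ℤ)) hK
      push_cast at this ⊢
      linarith
    have hcond : (n : ℤ) ∣ ((((q.1 + 1) * n - l - 1 : ℕ) : ℤ) + 1 + l) := by
      rw [hKZ]
      exact ⟨q.1 + 1, by push_cast; ring⟩
    rw [if_pos hcond]
    have hKR : ((((q.1 + 1) * n - l - 1 : ℕ) : ℝ) + 1 + l) = (((q.1 + 1) * n : ℕ) : ℝ) := by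
      exact_mod_cast congrArg (fun t : ℕ => (t : ℝ)) hK
    push_cast at hKR
    congr 2
    linarith

lemma reindexB (m : ℝ) {n : ℕ} (hn : 0 < n) {l : ℕ} (hl1 : 1 ≤ l) (hl : l < n) :
    ∑' k : ℕ, (if (n : ℤ) ∣ ((l : ℤ) - ((k : ℤ) + 1)) then (2 * π * ((k : ℝ) + 1)) ^ (-(2 * m)) else 0)
      = ∑' q : ℕ, (2 * π * ((q : ℝ) * n + l)) ^ (-(2 * m)) := by
  have hbase : ∀ q : ℕ, (0 : ℝ) < 2 * π * ((q : ℝ) * n + l) := by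
    intro q
    have hlpos : (0 : ℝ) < l := by exact_mod_cast hl1
    have := Real.pi_pos
    nlinarith [mul_nonneg (Nat.cast_nonneg (α := ℝ) q) (Nat.cast_nonneg (α := ℝ) n)]
  refine tsum_eq_tsum_of_ne_zero_bij (fun q => q.1 * n + l - 1) ?_ ?_ ?_
  · intro x y hxy
    have hxy' : x.1 * n + l - 1 = y.1 * n + l - 1 := hxy
    have hxy'' : x.1 * n = y.1 * n := by omega
    exact Subtype.ext (Nat.eq_of_mul_eq_mul_right hn hxy'')
  · intro k hk
    have hcond : (n : ℤ) ∣ ((l : ℤ) - ((k : ℤ) + 1)) := by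
      by_contra hc
      simp only [Function.mem_support, if_neg hc] at hk
      exact hk rfl
    obtain ⟨c, hc⟩ := hcond
    have hcnp : c ≤ 0 := by
      by_contra hc0
      push_neg at hc0
      have h1 : (n : ℤ) ≤ (n : ℤ) * c := by nlinarith [Int.natCast_pos.2 hn]
      have h2 : (l : ℤ) - ((k : ℤ) + 1) ≤ l - 1 := by
        have : (0 : ℤ) ≤ k := Int.ofNat_nonneg k
        linarith
      have h3 : (l : ℤ) < n := by exact_mod_cast hl
      omega
    set q : ℕ := (-c).toNat with hq
    have hct : ((q : ℤ)) = -c := Int.toNat_of_nonneg (by omega)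
    have hnat : k + 1 = q * n + l := by
      have h1 : ((k + 1 : ℕ) : ℤ) = ((q * n + l : ℕ) : ℤ) := by
        push_cast [hct]
        linarith [hc]
      exact_mod_cast h1
    have hgq : (fun q : ℕ => (2 * π * ((q : ℝ) * n + l)) ^ (-(2 * m))) q ≠ 0 :=
      (Real.rpow_pos_of_pos (hbase q) _).ne'
    refine ⟨⟨q, hgq⟩, ?_⟩
    show q * n + l - 1 = k
    omega
  · intro q
    show (if (n : ℤ) ∣ ((l : ℤ) - (((q.1 * n + l - 1 : ℕ) : ℤ) + 1))
        then (2 * π * (((q.1 * n + l - 1 : ℕ) : ℝ) + 1)) ^ (-(2 * m)) else 0)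
      = (2 * π * ((q.1 : ℝ) * n + l)) ^ (-(2 * m))
    have hK : (q.1 * n + l - 1) + 1 = q.1 * n + l := by omega
    have hKZ : (((q.1 * n + l - 1 : ℕ) : ℤ) + 1) = ((q.1 * n + l : ℕ) : ℤ) := by
      have := congrArg (fun t : ℕ => (t : ℤ)) hK
      push_cast at this ⊢
      linarith
    have hcond : (n : ℤ) ∣ ((l : ℤ) - (((q.1 * n + l - 1 : ℕ) : ℤ) + 1)) := by
      rw [hKZ]
      refine ⟨-q.1, ?_⟩
      push_cast
      ring
    rw [if_pos hcond]
    have hKR : (((q.1 * n + l - 1 : ℕ) : ℝ) + 1) = ((q.1 * n + l : ℕ) : ℝ) := by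
      exact_mod_cast congrArg (fun t : ℕ => (t : ℝ)) hK
    push_cast at hKR
    congr 2

/-- The discrete Fourier transform of the sequence `(c_j)` gives the eigenvalues `λ_{c,l}`. -/
theorem dft_of_spline_circulant_entries
    (m : ℝ) (hm : 1 / 2 < m) (n : ℕ) (hn : 1 ≤ n) (l : ℕ) (hl : l ≤ n - 1) :
    ∑ j ∈ Finset.range n, (cSeq m n j : ℂ) *
        Complex.exp (2 * π * Complex.I * j * l / n) = (lamC m n l : ℂ) := by
  have hn0 : 0 < n := hn
  have hl' : l < n := by omega
  have hnC : (n : ℂ) ≠ 0 := Nat.cast_ne_zero.2 hn0.ne'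
  have hπ := Real.pi_pos
  set w : ℕ → ℝ := fun k => (2 * π * ((k : ℝ) + 1)) ^ (-(2 * m)) with hw_def
  have hbpos : ∀ k : ℕ, (0 : ℝ) < 2 * π * ((k : ℝ) + 1) := by
    intro k; positivity
  have hwpos : ∀ k, 0 < w k := fun k => Real.rpow_pos_of_pos (hbpos k) _
  have hw : Summable w := by
    have h1 : Summable (fun k : ℕ => ((k : ℝ)) ^ (-(2 * m))) :=
      Real.summable_nat_rpow.2 (by linarith)
    have h2 : Summable (fun k : ℕ => ((k : ℝ) + 1) ^ (-(2 * m))) := by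
      have h3 := (summable_nat_add_iff (f := fun k : ℕ => ((k : ℝ)) ^ (-(2 * m))) 1).2 h1
      refine h3.congr fun k => ?_
      push_cast
      rfl
    have h4 := h2.mul_left ((2 * π) ^ (-(2 * m)))
    refine h4.congr fun k => ?_
    rw [hw_def]
    dsimp only
    rw [← Real.mul_rpow (by positivity) (by positivity)]
  have hwinv : ∀ k : ℕ, w k = ((2 * π * ((k : ℝ) + 1)) ^ (2 * m))⁻¹ := by
    intro k
    rw [hw_def]
    dsimp only
    rw [Real.rpow_neg (hbpos k).le]
  set A : ℕ → ℝ := fun k => if (n : ℤ) ∣ ((k : ℤ) + 1 + l) then w k else 0 with hA_def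
  set B : ℕ → ℝ := fun k => if (n : ℤ) ∣ ((l : ℤ) - ((k : ℤ) + 1)) then w k else 0 with hB_def
  have hA : Summable A := by
    refine Summable.of_nonneg_of_le (fun k => ?_) (fun k => ?_) hw
    · simp only [hA_def]
      split_ifs
      exacts [(hwpos k).le, le_rfl]
    · simp only [hA_def]
      split_ifs
      exacts [le_rfl, (hwpos k).le]
  have hB : Summable B := by
    refine Summable.of_nonneg_of_le (fun k => ?_) (fun k => ?_) hw
    · simp only [hB_def]
      split_ifs
      exacts [(hwpos k).le, le_rfl]
    · simp only [hB_def]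
      split_ifs
      exacts [le_rfl, (hwpos k).le]
  have hcast : ∀ j : ℕ, (cSeq m n j : ℂ) = (2 / (n : ℂ)) * ∑' k : ℕ,
      ((Real.cos (2 * π * ((k : ℝ) + 1) * j / n) / (2 * π * ((k : ℝ) + 1)) ^ (2 * m) : ℝ) : ℂ) := by
    intro j
    simp only [cSeq]
    rw [Complex.ofReal_mul, Complex.ofReal_tsum]
    congr 1
    push_cast
    ring
  have hterm : ∀ j ∈ Finset.range n,
      (cSeq m n j : ℂ) * Complex.exp (2 * π * Complex.I * j * l / n)
      = ∑' k : ℕ, (2 / (n : ℂ)) *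
          ((Real.cos (2 * π * ((k : ℝ) + 1) * j / n) / (2 * π * ((k : ℝ) + 1)) ^ (2 * m) : ℝ) : ℂ)
          * Complex.exp (2 * π * Complex.I * j * l / n) := by
    intro j _
    rw [hcast j, ← tsum_mul_left, ← tsum_mul_right]
  have hsumm : ∀ j ∈ Finset.range n, Summable (fun k : ℕ => (2 / (n : ℂ)) *
      ((Real.cos (2 * π * ((k : ℝ) + 1) * j / n) / (2 * π * ((k : ℝ) + 1)) ^ (2 * m) : ℝ) : ℂ)
      * Complex.exp (2 * π * Complex.I * j * l / n)) := by
    intro j _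
    have hr : Summable (fun k : ℕ =>
        Real.cos (2 * π * ((k : ℝ) + 1) * j / n) / (2 * π * ((k : ℝ) + 1)) ^ (2 * m)) := by
      refine Summable.of_norm_bounded hw fun k => ?_
      rw [Real.norm_eq_abs, abs_div, abs_of_pos (Real.rpow_pos_of_pos (hbpos k) _), hwinv k,
        div_eq_mul_inv]
      have h1 : |Real.cos (2 * π * ((k : ℝ) + 1) * j / n)| ≤ 1 := Real.abs_cos_le_one _
      have h2 : (0 : ℝ) ≤ ((2 * π * ((k : ℝ) + 1)) ^ (2 * m))⁻¹ := by positivity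
      nlinarith
    exact ((Complex.summable_ofReal.2 hr).mul_left (2 / (n : ℂ))).mul_right _
  have key : ∀ k : ℕ, (∑ j ∈ Finset.range n, (2 / (n : ℂ)) *
      ((Real.cos (2 * π * ((k : ℝ) + 1) * j / n) / (2 * π * ((k : ℝ) + 1)) ^ (2 * m) : ℝ) : ℂ)
      * Complex.exp (2 * π * Complex.I * j * l / n)) = ((A k + B k : ℝ) : ℂ) := by
    intro k
    have hsplit : ∀ j ∈ Finset.range n, (2 / (n : ℂ)) *
        ((Real.cos (2 * π * ((k : ℝ) + 1) * j / n) / (2 * π * ((k : ℝ) + 1)) ^ (2 * m) : ℝ) : ℂ)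
        * Complex.exp (2 * π * Complex.I * j * l / n)
        = ((2 / (n : ℂ)) * ((w k : ℝ) : ℂ)) *
          ((Real.cos (2 * π * ((k + 1 : ℕ) : ℝ) * j / n) : ℂ)
            * Complex.exp (2 * π * Complex.I * j * l / n)) := by
      intro j _
      rw [show (Real.cos (2 * π * ((k : ℝ) + 1) * j / n) / (2 * π * ((k : ℝ) + 1)) ^ (2 * m))
          = Real.cos (2 * π * ((k : ℝ) + 1) * j / n) * ((2 * π * ((k : ℝ) + 1)) ^ (2 * m))⁻¹
          from div_eq_mul_inv _ _, ← hwinv k]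
      push_cast
      ring
    rw [Finset.sum_congr rfl hsplit, ← Finset.mul_sum, cos_sum hn0 (k + 1) l]
    have e1 : (((k + 1 : ℕ) : ℤ) + l) = ((k : ℤ) + 1 + l) := by push_cast; ring
    have e2 : ((l : ℤ) - ((k + 1 : ℕ) : ℤ)) = ((l : ℤ) - ((k : ℤ) + 1)) := by push_cast; ring
    rw [e1, e2]
    simp only [hA_def, hB_def]
    split_ifs <;> (push_cast; field_simp) <;> ring
  have hmain : (∑ j ∈ Finset.range n, (cSeq m n j : ℂ) *
      Complex.exp (2 * π * Complex.I * j * l / n)) = (((∑' k, A k) + (∑' k, B k) : ℝ) : ℂ) := by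
    rw [Finset.sum_congr rfl hterm, ← Summable.tsum_finsetSum hsumm]
    rw [tsum_congr key, ← Complex.ofReal_tsum, Summable.tsum_add hA hB]
  rw [hmain]
  congr 1
  rcases Nat.eq_zero_or_pos l with rfl | hlpos
  · have hBA : ∀ k, B k = A k := by
      intro k
      simp only [hA_def, hB_def]
      have hiff : ((n : ℤ) ∣ (((0 : ℕ) : ℤ) - ((k : ℤ) + 1))) ↔ ((n : ℤ) ∣ ((k : ℤ) + 1 + ((0 : ℕ) : ℤ))) := by
        push_cast
        rw [zero_sub, dvd_neg, add_zero]
      exact if_congr hiff rfl rfl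
    have h1 : (∑' k, A k) = ∑' q : ℕ, (2 * π * (((q : ℝ) + 1) * n - ((0 : ℕ) : ℝ))) ^ (-(2 * m)) := by
      rw [hA_def, hw_def]
      exact reindexA m hn0 hl'
    have h2 : (∑' q : ℕ, (2 * π * (((q : ℝ) + 1) * n - ((0 : ℕ) : ℝ))) ^ (-(2 * m)))
        = ∑' kk : ℕ, (2 * π * ((kk : ℝ) + 1) * n) ^ (-(2 * m)) := by
      refine tsum_congr fun q => ?_
      congr 1
      push_cast
      ring
    have hL : lamC m n 0 = 2 * ∑' kk : ℕ, (2 * π * ((kk : ℝ) + 1) * n) ^ (-(2 * m)) := by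
      unfold lamC
      rw [if_pos rfl]
    rw [tsum_congr hBA, h1, h2, hL]
    ring
  · have h1 : (∑' k, A k) = ∑' q : ℕ, (2 * π * (((q : ℝ) + 1) * n - l)) ^ (-(2 * m)) := by
      rw [hA_def, hw_def]
      exact reindexA m hn0 hl'
    have h2 : (∑' k, B k) = ∑' q : ℕ, (2 * π * ((q : ℝ) * n + l)) ^ (-(2 * m)) := by
      rw [hB_def, hw_def]
      exact reindexB m hn0 hlpos hl'
    have hL : lamC m n l = (∑' kk : ℕ, (2 * π * (((kk : ℝ) + 1) * (n : ℝ) - l)) ^ (-(2 * m)))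
        + ∑' kk : ℕ, (2 * π * ((kk : ℝ) * n + l)) ^ (-(2 * m)) := by
      unfold lamC
      rw [if_neg (by omega : ¬ l = 0)]
    rw [h1, h2, hL]

end
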